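/- arXiv:2401.06419 — 2 statements merged into one kernel-verified Lean document; each statement's English description precedes it below -/
import Mathlib

section
/- The function g(y) = y(2^{1/y} - 1) is strictly convex on (0, ∞). -/
noncomputable def g (y : ℝ) : ℝ := y * ((2 : ℝ) ^ (1 / y) - 1)

open Real

lemma g_eq {y : ℝ} (hy : 0 < y) : g y = y * Real.exp (Real.log 2 / y) - y := by
  rw [g, Real.rpow_def_of_pos (by norm_num : (0:ℝ) < 2)]
  ring_nf

lemma hd1 {y : ℝ} (hy : 0 < y) :
    HasDerivAt (fun y => y * Real.exp (Real.log 2 / y) - y)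
      (Real.exp (Real.log 2 / y) * (1 - Real.log 2 / y) - 1) y := by
  have h1 : HasDerivAt (fun y : ℝ => Real.log 2 / y) (-(Real.log 2 / y ^ 2)) y := by
    simpa [div_eq_mul_inv, mul_comm, neg_div, mul_div_assoc] using
      ((hasDerivAt_inv hy.ne').const_mul (Real.log 2))
  have h2 := h1.exp
  have h3 := (hasDerivAt_id y).mul h2
  have h4 := h3.sub (hasDerivAt_id y)
  refine h4.congr_deriv ?_
  simp only [id, Pi.sub_apply]
  field_simp
  ring

lemma hd2 {y : ℝ} (hy : 0 < y) :
    HasDerivAt (fun y => Real.exp (Real.log 2 / y) * (1 - Real.log 2 / y) - 1)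
      (Real.exp (Real.log 2 / y) * (Real.log 2 ^ 2 / y ^ 3)) y := by
  have h1 : HasDerivAt (fun y : ℝ => Real.log 2 / y) (-(Real.log 2 / y ^ 2)) y := by
    simpa [div_eq_mul_inv, mul_comm, neg_div, mul_div_assoc] using
      ((hasDerivAt_inv hy.ne').const_mul (Real.log 2))
  have h2 := h1.exp
  have h3 := ((hasDerivAt_const y (1:ℝ)).sub h1)
  have h4 := (h2.mul h3).sub_const 1
  refine h4.congr_deriv ?_
  simp only [id, Pi.sub_apply]
  field_simp
  ring

theorem stmt_1 : StrictConvexOn ℝ (Set.Ioi (0 : ℝ)) g := by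
  have key : StrictConvexOn ℝ (Set.Ioi (0 : ℝ))
      (fun y => y * Real.exp (Real.log 2 / y) - y) := by
    apply strictConvexOn_of_deriv2_pos (convex_Ioi 0)
    · exact ContinuousOn.sub (continuousOn_id.mul (Real.continuous_exp.comp_continuousOn
        (continuousOn_const.div continuousOn_id fun x hx => ne_of_gt hx))) continuousOn_id
    · intro y hy
      rw [interior_Ioi] at hy
      have hy : 0 < y := hy
      have hder : deriv (fun y => y * Real.exp (Real.log 2 / y) - y) =ᶠ[nhds y]
          (fun y => Real.exp (Real.log 2 / y) * (1 - Real.log 2 / y) - 1) := by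
        filter_upwards [eventually_gt_nhds hy] with z hz
        exact (hd1 hz).deriv
      have e1 : deriv^[2] (fun y => y * Real.exp (Real.log 2 / y) - y) y
          = Real.exp (Real.log 2 / y) * (Real.log 2 ^ 2 / y ^ 3) := by
        show deriv (deriv _) y = _
        rw [hder.deriv_eq, (hd2 hy).deriv]
      rw [e1]
      have h2 : (0:ℝ) < Real.log 2 := Real.log_pos (by norm_num)
      positivity
  have heq : Set.EqOn g (fun y => y * Real.exp (Real.log 2 / y) - y) (Set.Ioi 0) :=
    fun y hy => g_eq hy
  exact key.congr heq.symm
end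

section
/- The derivative g'(y) = 2^{1/y}(1 - (ln 2)/y) - 1 is negative for all y ∈ (0, ln 2], so g is strictly decreasing on (0, ln 2]. -/
lemma gderiv (y : ℝ) (hy : 0 < y) :
    HasDerivAt g ((2 : ℝ) ^ (1 / y) * (1 - Real.log 2 / y) - 1) y := by
  have hne : y ≠ 0 := ne_of_gt hy
  have h1 : HasDerivAt (fun x : ℝ => 1 / x) (-(y ^ 2)⁻¹) y := by
    simpa using hasDerivAt_inv hne
  have h2 : HasDerivAt (fun x : ℝ => (2 : ℝ) ^ x)
      ((2 : ℝ) ^ (1 / y) * Real.log 2) (1 / y) :=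
    (Real.hasStrictDerivAt_const_rpow (by norm_num) _).hasDerivAt
  have h3 := h2.comp y h1
  have h4 : HasDerivAt (fun x : ℝ => (2 : ℝ) ^ (1 / x) - 1)
      ((2 : ℝ) ^ (1 / y) * Real.log 2 * -(y ^ 2)⁻¹) y := h3.sub_const 1
  have h5 : HasDerivAt (fun x : ℝ => id x * ((2 : ℝ) ^ (1 / x) - 1))
      (1 * ((2 : ℝ) ^ (1 / y) - 1) + y * ((2 : ℝ) ^ (1 / y) * Real.log 2 * -(y ^ 2)⁻¹)) y :=
    (hasDerivAt_id y).fun_mul h4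
  convert h5 using 1
  · rfl
  field_simp
  ring

theorem stmt_3 :
    (∀ y : ℝ, 0 < y → y ≤ Real.log 2 →
      (2 : ℝ) ^ (1 / y) * (1 - Real.log 2 / y) - 1 < 0) ∧
    StrictAntiOn g (Set.Ioc (0 : ℝ) (Real.log 2)) := by
  have key : ∀ y : ℝ, 0 < y → y ≤ Real.log 2 →
      (2 : ℝ) ^ (1 / y) * (1 - Real.log 2 / y) - 1 < 0 := by
    intro y hy hle
    have h1 : (1 : ℝ) ≤ Real.log 2 / y := (one_le_div hy).mpr hle
    have h2 : (0:ℝ) < (2 : ℝ) ^ (1 / y) := Real.rpow_pos_of_pos (by norm_num) _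
    nlinarith
  refine ⟨key, ?_⟩
  apply strictAntiOn_of_deriv_neg (convex_Ioc _ _)
  · exact fun x hx => ((gderiv x hx.1).continuousAt).continuousWithinAt
  · intro x hx
    rw [interior_Ioc] at hx
    rw [(gderiv x hx.1).deriv]
    exact key x hx.1 hx.2.le
end
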